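/- For every non-trivial rule word w and every initial configuration (C,p,d), the orbit of the ant is unbounded: the set of positions {p_t : t ≥ 0}, where (C_t,p_t,d_t) = T_w^t(C,p,d), is infinite. -/

import Mathlib

/-- Cells of the grid `ℤ²`. -/
abbrev Cell : Type := ℤ × ℤ

/-- The two letters of a rule word. -/
inductive Letter : Type
  | L | R
deriving DecidableEq

/-- The four unit directions of `ℤ²` (the state set `Q`). -/
inductive Dir : Type
  | E | N | W | S
deriving DecidableEq

/-- Rotation by 90° counterclockwise. -/
def Dir.left : Dir → Dir
  | .E => .N | .N => .W | .W => .S | .S => .E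

/-- Rotation by 90° clockwise. -/
def Dir.right : Dir → Dir
  | .E => .S | .S => .W | .W => .N | .N => .E

/-- The unit vector of a direction. -/
def Dir.vec : Dir → Cell
  | .E => (1, 0) | .N => (0, 1) | .W => (-1, 0) | .S => (0, -1)

/-- Configurations: a picture `ℤ² → ℤ/nℤ`, a position and a direction. -/
abbrev Config (n : ℕ) : Type := (Cell → ZMod n) × Cell × Dir

/-- One step of the generalised ant with rule word `w ∈ {L,R}⁺`:
the symbol under the ant is increased by `1 (mod |w|)`, the ant turns left or
right according to the letter `w_{C(p)}`, and moves one step in its new direction. -/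
def antStepW (w : List Letter) (cfg : Config w.length) : Config w.length :=
  let C := cfg.1
  let p := cfg.2.1
  let d' := if w.getD (C p).val Letter.L = Letter.L then cfg.2.2.left else cfg.2.2.right
  (Function.update C p (C p + 1), p + d'.vec, d')

-- auxiliary defs
instance Dir.instFintypeDir : Fintype Dir :=
  ⟨{Dir.E, Dir.N, Dir.W, Dir.S}, by intro d; cases d <;> simp⟩

def Dir.horiz : Dir → Bool
  | .E => true | .W => true | .N => false | .S => false

lemma Dir.right_left (d : Dir) : d.left.right = d := by cases d <;> rfl
lemma Dir.left_right (d : Dir) : d.right.left = d := by cases d <;> rfl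
lemma Dir.horiz_left (d : Dir) : d.left.horiz = !d.horiz := by cases d <;> rfl
lemma Dir.horiz_right (d : Dir) : d.right.horiz = !d.horiz := by cases d <;> rfl

lemma antStep_C (w : List Letter) (x : Config w.length) :
    (antStepW w x).1 = Function.update x.1 x.2.1 (x.1 x.2.1 + 1) := rfl

lemma antStep_dir (w : List Letter) (x : Config w.length) :
    (antStepW w x).2.2 =
      if w.getD (x.1 x.2.1).val Letter.L = Letter.L then x.2.2.left else x.2.2.right := rfl

lemma antStep_pos (w : List Letter) (x : Config w.length) :
    (antStepW w x).2.1 = x.2.1 + (antStepW w x).2.2.vec := rfl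

def antBack (w : List Letter) (cfg : Config w.length) : Config w.length :=
  let d' := cfg.2.2
  let p := cfg.2.1 - d'.vec
  let C := Function.update cfg.1 p (cfg.1 p - 1)
  (C, p, if w.getD (C p).val Letter.L = Letter.L then d'.right else d'.left)

lemma antBack_antStepW (w : List Letter) (cfg : Config w.length) :
    antBack w (antStepW w cfg) = cfg := by
  obtain ⟨C, p, d⟩ := cfg
  dsimp only [antStepW, antBack]
  simp only [add_sub_cancel_right, Function.update_self, add_sub_cancel_right,
    Function.update_idem, Function.update_eq_self]
  by_cases hℓ : w.getD (C p).val Letter.L = Letter.L <;>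
    simp [hℓ, Dir.right_left, Dir.left_right, -List.getD_eq_getElem?_getD]

lemma antStep_injective (w : List Letter) : Function.Injective (antStepW w) :=
  Function.LeftInverse.injective (g := antBack w) (antBack_antStepW w)

lemma even_add_vec (q : Cell) (d : Dir) :
    Even ((q + d.vec).1 + (q + d.vec).2) ↔ ¬ Even (q.1 + q.2) := by
  cases d <;> simp [Dir.vec, Prod.fst_add, Prod.snd_add, Int.even_iff] <;> omega

def antInv {n : ℕ} (x : Config n) : Bool :=
  xor x.2.2.horiz (decide (Even (x.2.1.1 + x.2.1.2)))

lemma antInv_step (w : List Letter) (x : Config w.length) :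
    antInv (antStepW w x) = antInv x := by
  have h1 : (antStepW w x).2.2.horiz = !x.2.2.horiz := by
    rw [antStep_dir]; split <;> simp [Dir.horiz_left, Dir.horiz_right]
  have h2' : Even ((antStepW w x).2.1.1 + (antStepW w x).2.1.2)
      ↔ ¬ Even (x.2.1.1 + x.2.1.2) := by
    rw [antStep_pos]; exact even_add_vec _ _
  have h2 : decide (Even ((antStepW w x).2.1.1 + (antStepW w x).2.1.2))
      = !decide (Even (x.2.1.1 + x.2.1.2)) := by
    rw [decide_eq_decide.mpr h2', decide_not]
  unfold antInv
  rw [h1, h2]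
  cases x.2.2.horiz <;> cases (decide (Even (x.2.1.1 + x.2.1.2))) <;> rfl

/-- The trajectory. -/
def antP (w : List Letter) (cfg : Config w.length) (t : ℕ) : Config w.length :=
  (antStepW w)^[t] cfg

lemma antP_succ (w : List Letter) (cfg : Config w.length) (t : ℕ) :
    antP w cfg (t + 1) = antStepW w (antP w cfg t) :=
  Function.iterate_succ_apply' _ _ _

lemma antP_inv (w : List Letter) (cfg : Config w.length) (t : ℕ) :
    antInv (antP w cfg t) = antInv cfg := by
  induction t with
  | zero => rfl
  | succ t ih => rw [antP_succ, antInv_step, ih]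

lemma antPos_succ (w : List Letter) (cfg : Config w.length) (t : ℕ) :
    (antP w cfg (t+1)).2.1 = (antP w cfg t).2.1 + (antP w cfg (t+1)).2.2.vec := by
  rw [antP_succ]; rfl

lemma antDir_succ (w : List Letter) (cfg : Config w.length) (t : ℕ) :
    (antP w cfg (t+1)).2.2 =
      if w.getD ((antP w cfg t).1 (antP w cfg t).2.1).val Letter.L = Letter.L
      then (antP w cfg t).2.2.left else (antP w cfg t).2.2.right := by
  rw [antP_succ]; rfl

lemma antCol_succ (w : List Letter) (cfg : Config w.length) (t : ℕ) :
    (antP w cfg (t+1)).1 =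
      Function.update (antP w cfg t).1 (antP w cfg t).2.1
        ((antP w cfg t).1 (antP w cfg t).2.1 + 1) := by
  rw [antP_succ]; rfl


/-- For every non-trivial rule word `w` (containing at least one `L`
and one `R`) and every initial configuration, the orbit of the ant is unbounded:
the set of visited positions is infinite. -/
theorem ant_orbit_unbounded (w : List Letter)
    (hL : Letter.L ∈ w) (hR : Letter.R ∈ w) (cfg : Config w.length) :
    {q : Cell | ∃ t : ℕ, ((antStepW w)^[t] cfg).2.1 = q}.Infinite := by
  intro hfin
  haveI : NeZero w.length :=
    ⟨by intro h; rw [List.length_eq_zero_iff] at h; subst h; exact List.not_mem_nil hL⟩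
  set V : Set Cell := {q : Cell | ∃ t : ℕ, ((antStepW w)^[t] cfg).2.1 = q} with hVdef
  have hmemV : ∀ t, (antP w cfg t).2.1 ∈ V := fun t => ⟨t, rfl⟩
  -- off the visited set, the colouring never changes
  have houtside : ∀ t (q : Cell), q ∉ V → (antP w cfg t).1 q = cfg.1 q := by
    intro t q hq
    induction t with
    | zero => rfl
    | succ t ih =>
      rw [antCol_succ, Function.update_of_ne (fun h => hq (by rw [h]; exact hmemV t)), ih]
  -- pigeonhole: two equal configurations along the orbit
  set F : ℕ → (hfin.toFinset → ZMod w.length) × hfin.toFinset × Dir :=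
    fun t => (fun q => (antP w cfg t).1 q.1,
      ⟨(antP w cfg t).2.1, hfin.mem_toFinset.mpr (hmemV t)⟩,
      (antP w cfg t).2.2) with hFdef
  have hPeq : ∀ a b : ℕ, F a = F b → antP w cfg a = antP w cfg b := by
    intro a b hFab
    have hC : (antP w cfg a).1 = (antP w cfg b).1 := by
      funext q
      by_cases hq : q ∈ V
      · exact congrFun (congrArg Prod.fst hFab) ⟨q, hfin.mem_toFinset.mpr hq⟩
      · rw [houtside a q hq, houtside b q hq]
    have hp : (antP w cfg a).2.1 = (antP w cfg b).2.1 :=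
      congrArg (fun z => z.2.1.1) hFab
    have hd : (antP w cfg a).2.2 = (antP w cfg b).2.2 :=
      congrArg (fun z => z.2.2) hFab
    exact Prod.ext hC (Prod.ext hp hd)
  obtain ⟨a, b, hlt, hPab⟩ :
      ∃ a b : ℕ, a < b ∧ antP w cfg a = antP w cfg b := by
    obtain ⟨a, b, hab, hFab⟩ := Finite.exists_ne_map_eq_of_infinite F
    rcases hab.lt_or_gt with h | h
    · exact ⟨a, b, h, hPeq a b hFab⟩
    · exact ⟨b, a, h, hPeq b a hFab.symm⟩
  -- periodicity
  set T : ℕ := b - a with hTdef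
  have hT : 0 < T := Nat.sub_pos_of_lt hlt
  have hfix : (antStepW w)^[T] cfg = cfg := by
    apply (antStep_injective w).iterate a
    rw [← Function.iterate_add_apply]
    have hab : a + T = b := by omega
    rw [hab]
    exact hPab.symm
  have hper : ∀ t, antP w cfg (t + T) = antP w cfg t := by
    intro t
    rw [antP, Function.iterate_add_apply, hfix]
    rfl
  -- extremal visited cell
  have hne : V.Nonempty := ⟨(antP w cfg 0).2.1, hmemV 0⟩
  obtain ⟨M, hMV, hMmax⟩ :=
    Set.exists_max_image V (fun q : Cell => toLex (q.2, q.1)) hfin hne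
  have hA : ((M.1, M.2 + 1) : Cell) ∉ V := by
    intro hmem
    have h := hMmax _ hmem
    rw [Prod.Lex.le_iff] at h
    simp only [ofLex_toLex] at h
    omega
  have hB : ((M.1 + 1, M.2) : Cell) ∉ V := by
    intro hmem
    have h := hMmax _ hmem
    rw [Prod.Lex.le_iff] at h
    simp only [ofLex_toLex] at h
    omega
  -- entries into M come from the south or the west
  have hentry1 : ∀ t, (antP w cfg (t+1)).2.1 = M →
      (antP w cfg (t+1)).2.2 = Dir.N ∨ (antP w cfg (t+1)).2.2 = Dir.E := by
    intro t hpt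
    have hmove := antPos_succ w cfg t
    rcases hd : (antP w cfg (t+1)).2.2 with _ | _ | _ | _
    · exact Or.inr rfl
    · exact Or.inl rfl
    · exfalso
      rw [hd, hpt] at hmove
      apply hB
      refine ⟨t, ?_⟩
      show (antP w cfg t).2.1 = _
      have h1 := congrArg Prod.fst hmove
      have h2 := congrArg Prod.snd hmove
      simp [Dir.vec] at h1 h2
      exact Prod.ext (by omega) (by omega)
    · exfalso
      rw [hd, hpt] at hmove
      apply hA
      refine ⟨t, ?_⟩
      show (antP w cfg t).2.1 = _
      have h1 := congrArg Prod.fst hmove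
      have h2 := congrArg Prod.snd hmove
      simp [Dir.vec] at h1 h2
      exact Prod.ext (by omega) (by omega)
  have hentry : ∀ t, (antP w cfg t).2.1 = M →
      (antP w cfg t).2.2 = Dir.N ∨ (antP w cfg t).2.2 = Dir.E := by
    intro t hpt
    have hperT := hper t
    obtain ⟨u, hu⟩ : ∃ u, t + T = u + 1 := ⟨t + T - 1, by omega⟩
    have := hentry1 u (by rw [← hu, hperT]; exact hpt)
    rw [← hu, hperT] at this
    exact this
  -- exits from M go south or west
  have hexit : ∀ t, (antP w cfg t).2.1 = M →
      (antP w cfg (t+1)).2.2 = Dir.W ∨ (antP w cfg (t+1)).2.2 = Dir.S := by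
    intro t hpt
    have hmove := antPos_succ w cfg t
    rcases hd : (antP w cfg (t+1)).2.2 with _ | _ | _ | _
    · exfalso
      rw [hd, hpt] at hmove
      apply hB
      refine ⟨t + 1, ?_⟩
      show (antP w cfg (t+1)).2.1 = _
      rw [hmove]
      exact Prod.ext (by simp [Dir.vec]) (by simp [Dir.vec])
    · exfalso
      rw [hd, hpt] at hmove
      apply hA
      refine ⟨t + 1, ?_⟩
      show (antP w cfg (t+1)).2.1 = _
      rw [hmove]
      exact Prod.ext (by simp [Dir.vec]) (by simp [Dir.vec])
    · exact Or.inl rfl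
    · exact Or.inr rfl
  -- the letter seen at M forces the entry direction
  have hforce : ∀ t, (antP w cfg t).2.1 = M →
      ((w.getD ((antP w cfg t).1 M).val Letter.L = Letter.L →
          (antP w cfg t).2.2 = Dir.N) ∧
       (w.getD ((antP w cfg t).1 M).val Letter.L = Letter.R →
          (antP w cfg t).2.2 = Dir.E)) := by
    intro t hpt
    have hdsucc := antDir_succ w cfg t
    rw [hpt] at hdsucc
    have hent := hentry t hpt
    have hex := hexit t hpt
    constructor
    · intro hLl
      rcases hent with h | h
      · exact h
      · exfalso
        rw [hLl, if_pos rfl, h] at hdsucc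
        rw [hdsucc] at hex
        simp [Dir.left] at hex
    · intro hRl
      rcases hent with h | h
      · exfalso
        have hcond : ¬ (w.getD ((antP w cfg t).1 M).val Letter.L = Letter.L) := by
          rw [hRl]; intro hc; cases hc
        rw [if_neg hcond, h] at hdsucc
        rw [hdsucc] at hex
        simp [Dir.right] at hex
      · exact h
  -- parity invariant: two visits to M cannot have entry directions N and E
  have hparity : ∀ s t, (antP w cfg s).2.1 = M → (antP w cfg t).2.1 = M →
      (antP w cfg s).2.2 = Dir.N → (antP w cfg t).2.2 = Dir.E → False := by
    intro s t hs ht hds hdt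
    have h1 := antP_inv w cfg s
    have h2 := antP_inv w cfg t
    rw [← h2] at h1
    unfold antInv at h1
    rw [hds, hdt, hs, ht] at h1
    cases hdec : decide (Even (M.1 + M.2)) <;> rw [hdec] at h1 <;>
      simp [Dir.horiz] at h1
  -- every colour occurs at M at some visit
  obtain ⟨t0, ht0⟩ := hMV
  have ht0' : (antP w cfg t0).2.1 = M := ht0
  have hnext : ∀ t, (antP w cfg t).2.1 = M → ∃ u, 0 < u ∧
      (antP w cfg (t+u)).2.1 = M ∧
      (antP w cfg (t+u)).1 M = (antP w cfg t).1 M + 1 := by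
    intro t hpt
    have hexu : ∃ u, 0 < u ∧ (antP w cfg (t+u)).2.1 = M :=
      ⟨T, hT, by rw [hper t]; exact hpt⟩
    classical
    refine ⟨Nat.find hexu, (Nat.find_spec hexu).1, (Nat.find_spec hexu).2, ?_⟩
    have humin := fun v hv => Nat.find_min hexu (m := v) hv
    have aux : ∀ v, 1 ≤ v → v ≤ Nat.find hexu →
        (antP w cfg (t+v)).1 M = (antP w cfg t).1 M + 1 := by
      intro v
      induction v with
      | zero => omega
      | succ v ih =>
        intro _ hvu
        rcases Nat.eq_zero_or_pos v with rfl | hv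
        · have hcs : (antP w cfg (t+1)).1 ((antP w cfg t).2.1)
              = (antP w cfg t).1 ((antP w cfg t).2.1) + 1 := by
            rw [antCol_succ, Function.update_self]
          rw [hpt] at hcs
          exact hcs
        · have hvlt : v < Nat.find hexu := by omega
          have hnotM : (antP w cfg (t+v)).2.1 ≠ M := by
            intro hMv
            exact (humin v hvlt) ⟨hv, hMv⟩
          have hstep : (antP w cfg (t+v+1)).1 M = (antP w cfg (t+v)).1 M := by
            rw [antCol_succ, Function.update_of_ne (fun h => hnotM h.symm)]
          rw [show t + (v+1) = t + v + 1 by omega, hstep]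
          exact ih (by omega) (by omega)
    exact aux _ (Nat.find_spec hexu).1 le_rfl
  have hreach : ∀ m : ℕ, ∃ t, (antP w cfg t).2.1 = M ∧
      (antP w cfg t).1 M = (antP w cfg t0).1 M + (m : ZMod w.length) := by
    intro m
    induction m with
    | zero => exact ⟨t0, ht0', by simp⟩
    | succ m ih =>
      obtain ⟨t, h1, h2⟩ := ih
      obtain ⟨u, _, h3, h4⟩ := hnext t h1
      refine ⟨t + u, h3, ?_⟩
      rw [h4, h2]
      push_cast
      ring
  have hallcolors : ∀ r : ZMod w.length, ∃ t, (antP w cfg t).2.1 = M ∧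
      (antP w cfg t).1 M = r := by
    intro r
    obtain ⟨t, h1, h2⟩ := hreach (r - (antP w cfg t0).1 M).val
    refine ⟨t, h1, ?_⟩
    rw [h2, ZMod.natCast_rightInverse _]
    ring
  -- a visit where the letter is L, and a visit where it is R
  obtain ⟨iL, hiL, hgetL⟩ := List.mem_iff_getElem.mp hL
  obtain ⟨iR, hiR, hgetR⟩ := List.mem_iff_getElem.mp hR
  obtain ⟨tL, hpL, hcL⟩ := hallcolors (iL : ZMod w.length)
  obtain ⟨tR, hpR, hcR⟩ := hallcolors (iR : ZMod w.length)
  have hletL : w.getD ((antP w cfg tL).1 M).val Letter.L = Letter.L := by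
    rw [hcL, ZMod.val_cast_of_lt hiL, List.getD_eq_getElem w _ hiL]
    exact hgetL
  have hletR : w.getD ((antP w cfg tR).1 M).val Letter.L = Letter.R := by
    rw [hcR, ZMod.val_cast_of_lt hiR, List.getD_eq_getElem w _ hiR]
    exact hgetR
  exact hparity tL tR hpL hpR ((hforce tL hpL).1 hletL) ((hforce tR hpR).2 hletR)
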